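/- Hilbert–Schmidt symmetrisation estimate (estimate (6.9)). Let H be a complex Hilbert space with a Hilbert (orthonormal) basis (e_i)_{i∈I}, and let L and M be bounded nonnegative self-adjoint operators on H such that Σ_i ‖(L M)(e_i)‖² < ∞. Let √L denote the positive square root of L (continuous functional calculus). Then Σ_i ‖(√L M √L)(e_i)‖² ≤ Σ_i ‖(L M)(e_i)‖²; that is, the Hilbert–Schmidt norm of L^{1/2} M L^{1/2} is at most the Hilbert–Schmidt norm of L M. -/

import Mathlib

open scoped ENNReal NNReal InnerProductSpace ComplexConjugate
open ContinuousLinearMap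

noncomputable def hsum {H : Type*} [NormedAddCommGroup H] [InnerProductSpace ℂ H]
    [CompleteSpace H] {I : Type*} (b : HilbertBasis I ℂ H) (A : H →L[ℂ] H) : ℝ≥0∞ :=
  ∑' i, (‖A (b i)‖₊ : ℝ≥0∞) ^ 2

section aux
variable {H : Type*} [NormedAddCommGroup H] [InnerProductSpace ℂ H] [CompleteSpace H]
  {I : Type*} (b : HilbertBasis I ℂ H)

lemma hasSum_parseval (x : H) :
    HasSum (fun i => ‖⟪b i, x⟫_ℂ‖ ^ 2) (‖x‖ ^ 2) := by
  have h := b.hasSum_inner_mul_inner x x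
  have h2 : (fun i => ⟪x, b i⟫_ℂ * ⟪b i, x⟫_ℂ) = fun i => ((‖⟪b i, x⟫_ℂ‖ ^ 2 : ℝ) : ℂ) := by
    funext i
    rw [← inner_conj_symm x (b i), Complex.conj_mul']
    push_cast; ring
  rw [h2] at h
  have h3 : ⟪x, x⟫_ℂ = ((‖x‖ ^ 2 : ℝ) : ℂ) := by
    rw [inner_self_eq_norm_sq_to_K]; norm_num
  rw [h3] at h
  have h4 := ((Complex.hasSum_iff _ _).mp h).1
  simpa [← Complex.ofReal_pow] using h4

lemma parseval_ennreal (x : H) :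
    (‖x‖₊ : ℝ≥0∞) ^ 2 = ∑' i, (‖⟪b i, x⟫_ℂ‖₊ : ℝ≥0∞) ^ 2 := by
  have h := hasSum_parseval b x
  have h1 : ENNReal.ofReal (‖x‖ ^ 2) = ∑' i, ENNReal.ofReal (‖⟪b i, x⟫_ℂ‖ ^ 2) := by
    rw [← ENNReal.ofReal_tsum_of_nonneg (fun i => by positivity) h.summable, h.tsum_eq]
  calc (‖x‖₊ : ℝ≥0∞) ^ 2 = ENNReal.ofReal (‖x‖ ^ 2) := by
        rw [ENNReal.ofReal_pow (norm_nonneg x), ofReal_norm, enorm_eq_nnnorm]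
    _ = ∑' i, (‖⟪b i, x⟫_ℂ‖₊ : ℝ≥0∞) ^ 2 := by
        rw [h1]; congr 1; funext i
        rw [ENNReal.ofReal_pow (norm_nonneg _), ofReal_norm, enorm_eq_nnnorm]

lemma hsum_adjoint (A : H →L[ℂ] H) : hsum b (adjoint A) = hsum b A := by
  have e : ∀ i j : I, (‖⟪b j, adjoint A (b i)⟫_ℂ‖₊ : ℝ≥0∞) ^ 2
      = (‖⟪b i, A (b j)⟫_ℂ‖₊ : ℝ≥0∞) ^ 2 := by
    intro i j
    have e1 : ⟪b j, adjoint A (b i)⟫_ℂ = conj ⟪b i, A (b j)⟫_ℂ := by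
      rw [adjoint_inner_right, ← inner_conj_symm]
    rw [e1, RCLike.nnnorm_conj]
  unfold hsum
  simp_rw [parseval_ennreal b, e]
  rw [ENNReal.tsum_comm]

lemma hsum_mul_left (A C : H →L[ℂ] H) : hsum b (A * C) ≤ (‖A‖₊ : ℝ≥0∞) ^ 2 * hsum b C := by
  unfold hsum
  rw [← ENNReal.tsum_mul_left]
  refine ENNReal.tsum_le_tsum fun i => ?_
  rw [← mul_pow]
  gcongr
  exact_mod_cast A.le_opNNNorm (C (b i))

lemma hsum_mul_right (A C : H →L[ℂ] H) : hsum b (A * C) ≤ (‖C‖₊ : ℝ≥0∞) ^ 2 * hsum b A := by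
  rw [← hsum_adjoint b (A * C), ← hsum_adjoint b A]
  have : adjoint (A * C) = adjoint C * adjoint A := by
    rw [← star_eq_adjoint, ← star_eq_adjoint, ← star_eq_adjoint, star_mul]
  rw [this]
  simpa using hsum_mul_left b (adjoint C) (adjoint A)

lemma summable_of_hsum_lt_top (A : H →L[ℂ] H) (h : hsum b A < ⊤) :
    Summable fun i => ‖A (b i)‖ ^ 2 := by
  unfold hsum at h
  have h2 : ∑' i, ((‖A (b i)‖₊ ^ 2 : ℝ≥0) : ℝ≥0∞) ≠ ⊤ := by
    simp_rw [ENNReal.coe_pow]; exact h.ne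
  have := ENNReal.tsum_coe_ne_top_iff_summable.mp h2
  have := NNReal.summable_coe.mpr this
  refine this.congr fun i => ?_
  push_cast; ring

lemma hsum_eq_ofReal (A : H →L[ℂ] H) (h : Summable fun i => ‖A (b i)‖ ^ 2) :
    hsum b A = ENNReal.ofReal (∑' i, ‖A (b i)‖ ^ 2) := by
  unfold hsum
  rw [ENNReal.ofReal_tsum_of_nonneg (fun i => by positivity) h]
  congr 1; funext i
  rw [ENNReal.ofReal_pow (norm_nonneg _), ofReal_norm, enorm_eq_nnnorm]

lemma real_tsum_eq_toReal (A : H →L[ℂ] H) (h : Summable fun i => ‖A (b i)‖ ^ 2) :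
    ∑' i, ‖A (b i)‖ ^ 2 = (hsum b A).toReal := by
  rw [hsum_eq_ofReal b A h, ENNReal.toReal_ofReal (tsum_nonneg fun i => by positivity)]

lemma summable_double_sq (U : H →L[ℂ] H) (hU : Summable fun i => ‖U (b i)‖ ^ 2) :
    Summable fun p : I × I => ‖⟪U (b p.1), b p.2⟫_ℂ‖ ^ 2 := by
  refine (summable_prod_of_nonneg fun p => by positivity).mpr ⟨fun i => ?_, ?_⟩
  · exact ((hasSum_parseval b (U (b i))).summable).congr fun j => by
      rw [norm_inner_symm]
  · refine hU.congr fun i => ?_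
    have h1 : ∀ j, ‖⟪U (b i), b j⟫_ℂ‖ ^ 2 = ‖⟪b j, U (b i)⟫_ℂ‖ ^ 2 := fun j => by
      rw [norm_inner_symm]
    simp_rw [h1]
    exact (hasSum_parseval b (U (b i))).tsum_eq.symm

lemma tsum_inner_adj_swap (U V : H →L[ℂ] H) (hU : Summable fun i => ‖U (b i)‖ ^ 2)
    (hV : Summable fun i => ‖V (b i)‖ ^ 2) :
    ∑' i, ⟪U (b i), V (b i)⟫_ℂ = ∑' i, ⟪adjoint V (b i), adjoint U (b i)⟫_ℂ := by
  set F : I → I → ℂ := fun i j => ⟪U (b i), b j⟫_ℂ * ⟪b j, V (b i)⟫_ℂ with hF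
  have hFsum : Summable (Function.uncurry F) := by
    apply Summable.of_norm
    have hbd : ∀ p : I × I, ‖Function.uncurry F p‖
        ≤ ‖⟪U (b p.1), b p.2⟫_ℂ‖ ^ 2 / 2 + ‖⟪b p.2, V (b p.1)⟫_ℂ‖ ^ 2 / 2 := by
      intro p
      rw [Function.uncurry, hF]
      simp only [norm_mul]
      nlinarith [sq_nonneg (‖⟪U (b p.1), b p.2⟫_ℂ‖ - ‖⟪b p.2, V (b p.1)⟫_ℂ‖),
        norm_nonneg ⟪U (b p.1), b p.2⟫_ℂ, norm_nonneg ⟪b p.2, V (b p.1)⟫_ℂ]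
    refine Summable.of_nonneg_of_le (fun p => norm_nonneg _) hbd ?_
    refine Summable.add ?_ ?_
    · exact (summable_double_sq b U hU).div_const 2
    · refine ((summable_double_sq b V hV).div_const 2).congr fun p => ?_
      rw [norm_inner_symm]
  calc ∑' i, ⟪U (b i), V (b i)⟫_ℂ
      = ∑' i, ∑' j, F i j := by
        refine tsum_congr fun i => ?_
        rw [← b.tsum_inner_mul_inner (U (b i)) (V (b i))]
    _ = ∑' j, ∑' i, F i j := (Summable.tsum_comm hFsum).symm
    _ = ∑' j, ⟪adjoint V (b j), adjoint U (b j)⟫_ℂ := by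
        refine tsum_congr fun j => ?_
        have e : ∀ i, F i j = ⟪adjoint V (b j), b i⟫_ℂ * ⟪b i, adjoint U (b j)⟫_ℂ := by
          intro i
          simp only [hF]
          have e1 : ⟪U (b i), b j⟫_ℂ = ⟪b i, adjoint U (b j)⟫_ℂ := by
            rw [adjoint_inner_right]
          have e2 : ⟪b j, V (b i)⟫_ℂ = ⟪adjoint V (b j), b i⟫_ℂ := by
            rw [adjoint_inner_left]
          rw [e1, e2, mul_comm]
        simp_rw [e]
        exact b.tsum_inner_mul_inner _ _

lemma inner_apply_adj (A C : H →L[ℂ] H) (x : H) :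
    ⟪A x, adjoint C x⟫_ℂ = ⟪(C * A) x, x⟫_ℂ := by
  rw [adjoint_inner_right]; rfl

end aux

lemma sqrt_reg_aux {ε x : ℝ} (hε : 0 < ε) (hx : 0 ≤ x) :
    |x * (Real.sqrt (x + ε))⁻¹ - Real.sqrt x| ≤ Real.sqrt ε := by
  set s := Real.sqrt x with hsdef
  set t := Real.sqrt (x + ε) with htdef
  set u := Real.sqrt ε with hudef
  have hs0 : 0 ≤ s := Real.sqrt_nonneg _
  have ht0 : 0 < t := Real.sqrt_pos.mpr (by linarith)
  have hu0 : 0 ≤ u := Real.sqrt_nonneg _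
  have hs : s ^ 2 = x := Real.sq_sqrt hx
  have ht : t ^ 2 = x + ε := Real.sq_sqrt (by linarith)
  have hu : u ^ 2 = ε := Real.sq_sqrt hε.le
  have hst : s ≤ t := Real.sqrt_le_sqrt (by linarith)
  have hut : u ≤ t := Real.sqrt_le_sqrt (by linarith)
  have hts : 0 < t + s := by linarith
  have key : s * (t - s) ≤ u * t := by
    have h1 : s * u ≤ t * t := by nlinarith
    have h2 : s * (t - s) * (t + s) ≤ u * t * (t + s) := by
      nlinarith [mul_nonneg hu0 (sub_nonneg.mpr h1), mul_nonneg (mul_nonneg hu0 ht0.le) hs0]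
    exact le_of_mul_le_mul_right h2 hts
  rw [abs_le]
  constructor
  · have h6 : s - u ≤ x * t⁻¹ := by
      rw [← div_eq_mul_inv, le_div_iff₀ ht0]
      nlinarith [key]
    linarith
  · have h5 : x * t⁻¹ ≤ s := by
      rw [← div_eq_mul_inv, div_le_iff₀ ht0]
      nlinarith
    linarith

set_option maxHeartbeats 1000000 in
open ContinuousLinearMap in
lemma hsum_step {H : Type*} [NormedAddCommGroup H] [InnerProductSpace ℂ H] [CompleteSpace H]
    {I : Type*} (b : HilbertBasis I ℂ H)
    (L M : H →L[ℂ] H) (hL : L.IsPositive) (hM : M.IsPositive)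
    (hfin : hsum b (L * M) < ⊤) {ε : ℝ} (hε : 0 < ε) :
    hsum b (cfc (fun x : ℝ => x * (Real.sqrt (x + ε))⁻¹) L * M *
      cfc (fun x : ℝ => x * (Real.sqrt (x + ε))⁻¹) L) ≤ hsum b (L * M) := by
  have hLsa : IsSelfAdjoint L := hL.isSelfAdjoint
  have hMsa : IsSelfAdjoint M := hM.isSelfAdjoint
  have hspec : ∀ x ∈ spectrum ℝ L, 0 ≤ x := by
    have h := hL.spectrumRestricts
    rw [SpectrumRestricts.nnreal_iff] at h
    exact h
  set g : ℝ → ℝ := fun x => (Real.sqrt (x + ε))⁻¹ with hgdef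
  have hgc : ContinuousOn g (spectrum ℝ L) := by
    intro x hx
    have hx0 := hspec x hx
    have h1 : Real.sqrt (x + ε) ≠ 0 := ne_of_gt (Real.sqrt_pos.mpr (by linarith))
    exact (((Real.continuous_sqrt.comp (continuous_add_right ε)).continuousAt).inv₀
      h1).continuousWithinAt
  set B := cfc g L with hBdef
  have hBsa : IsSelfAdjoint B := cfc_predicate g L
  set K := L * M with hKdef
  have hSe : cfc (fun x : ℝ => x * g x) L = L * B := by
    rw [cfc_mul (fun x : ℝ => x) g L continuousOn_id hgc, cfc_id' ℝ L]
  have hcomm : L * B = B * L := by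
    have e2 : cfc (fun x : ℝ => g x * x) L = B * L := by
      rw [cfc_mul g (fun x : ℝ => x) L hgc continuousOn_id, cfc_id' ℝ L]
    rw [← hSe, ← e2]
    exact cfc_congr fun x _ => mul_comm x (g x)
  set A0 := L * (B * B) with hA0def
  have hA0norm : ‖A0‖ ≤ 1 := by
    have eA0 : A0 = cfc (fun x : ℝ => x * (g x * g x)) L := by
      rw [cfc_mul (fun x : ℝ => x) (fun x => g x * g x) L continuousOn_id (hgc.mul hgc),
        cfc_mul g g L hgc hgc, cfc_id' ℝ L]
    rw [eA0]
    refine norm_cfc_le zero_le_one fun x hx => ?_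
    have hx0 := hspec x hx
    have h1 : g x * g x = (x + ε)⁻¹ := by
      rw [hgdef]
      simp only
      rw [← mul_inv, Real.mul_self_sqrt (by linarith)]
    rw [h1, Real.norm_eq_abs, abs_of_nonneg (by positivity)]
    rw [← div_eq_mul_inv, div_le_one (by linarith)]
    linarith
  set P := A0 * K with hPdef
  set W := B * K with hWdef
  set U := A0 * (K * (L * B)) with hUdef
  set G' := B * (K * (L * B)) with hG'def
  have hGoal : cfc (fun x : ℝ => x * g x) L * M * cfc (fun x : ℝ => x * g x) L = G' := by
    rw [hSe, hG'def, hKdef]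
    nth_rewrite 1 [hcomm]
    simp only [mul_assoc]
  -- self-adjointness of G'
  have hSesa : IsSelfAdjoint (cfc (fun x : ℝ => x * g x) L) := cfc_predicate _ L
  have hG'sa : IsSelfAdjoint G' := by
    rw [← hGoal]
    have h := hMsa.conjugate (cfc (fun x : ℝ => x * g x) L)
    rwa [hSesa.star_eq] at h
  have hG'adj : adjoint G' = G' := isSelfAdjoint_iff'.mp hG'sa
  have hPadj : adjoint P = adjoint K * adjoint A0 := by
    rw [← star_eq_adjoint, ← star_eq_adjoint, ← star_eq_adjoint, hPdef, star_mul]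
  -- finiteness
  have coe_sq_lt : ∀ C : H →L[ℂ] H, ((‖C‖₊ : ℝ≥0∞)) ^ 2 < ⊤ := fun C => by
    rw [← ENNReal.coe_pow]; exact ENNReal.coe_lt_top
  have finK : hsum b K < ⊤ := hfin
  have finKLB : hsum b (K * (L * B)) < ⊤ :=
    lt_of_le_of_lt (hsum_mul_right b _ _) (ENNReal.mul_lt_top (coe_sq_lt _) finK)
  have finU : hsum b U < ⊤ :=
    lt_of_le_of_lt (hsum_mul_left b _ _) (ENNReal.mul_lt_top (coe_sq_lt _) finKLB)
  have finG' : hsum b G' < ⊤ :=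
    lt_of_le_of_lt (hsum_mul_left b _ _) (ENNReal.mul_lt_top (coe_sq_lt _) finKLB)
  have finW : hsum b W < ⊤ :=
    lt_of_le_of_lt (hsum_mul_left b _ _) (ENNReal.mul_lt_top (coe_sq_lt _) finK)
  have finAdjW : hsum b (adjoint W) < ⊤ := by rwa [hsum_adjoint b W]
  have finP : hsum b P < ⊤ :=
    lt_of_le_of_lt (hsum_mul_left b _ _) (ENNReal.mul_lt_top (coe_sq_lt _) finK)
  have finAdjP : hsum b (adjoint P) < ⊤ := by rwa [hsum_adjoint b P]
  have sumU := summable_of_hsum_lt_top b U finU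
  have sumAdjW := summable_of_hsum_lt_top b (adjoint W) finAdjW
  have sumG' := summable_of_hsum_lt_top b G' finG'
  have sumP := summable_of_hsum_lt_top b P finP
  have sumAdjP := summable_of_hsum_lt_top b (adjoint P) finAdjP
  -- pointwise identities
  have hterm1 : ∀ i, ⟪U (b i), adjoint W (b i)⟫_ℂ = ((‖G' (b i)‖ ^ 2 : ℝ) : ℂ) := by
    intro i
    rw [inner_apply_adj]
    have hWU : W * U = G' * G' := by
      rw [hWdef, hUdef, hG'def, hA0def]
      simp only [mul_assoc, ← hcomm]
    rw [hWU, ← inner_apply_adj G' G', hG'adj, inner_self_eq_norm_sq_to_K]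
    norm_cast
  have hterm2 : ∀ i, ⟪W (b i), adjoint U (b i)⟫_ℂ = ⟪P (b i), adjoint P (b i)⟫_ℂ := by
    intro i
    rw [inner_apply_adj, inner_apply_adj]
    have hUW : U * W = P * P := by
      rw [hWdef, hUdef, hPdef, hA0def]
      simp only [mul_assoc, ← hcomm]
    rw [hUW]
  -- the chain of sums
  have hc1 : ∑' i, ⟪U (b i), adjoint W (b i)⟫_ℂ = ((∑' i, ‖G' (b i)‖ ^ 2 : ℝ) : ℂ) := by
    rw [tsum_congr hterm1]
    exact (sumG'.hasSum.mapL Complex.ofRealCLM).tsum_eq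
  have hswap := tsum_inner_adj_swap b U (adjoint W) sumU sumAdjW
  rw [adjoint_adjoint] at hswap
  have hc3 : ((∑' i, ‖G' (b i)‖ ^ 2 : ℝ) : ℂ) = ∑' i, ⟪P (b i), adjoint P (b i)⟫_ℂ := by
    rw [← hc1, hswap]
    exact tsum_congr hterm2
  -- Cauchy-Schwarz / AM-GM bound
  have hnormterm : ∀ i, ‖⟪P (b i), adjoint P (b i)⟫_ℂ‖
      ≤ ‖P (b i)‖ ^ 2 / 2 + ‖adjoint P (b i)‖ ^ 2 / 2 := by
    intro i
    refine (norm_inner_le_norm _ _).trans ?_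
    nlinarith [sq_nonneg (‖P (b i)‖ - ‖adjoint P (b i)‖), norm_nonneg (P (b i)),
      norm_nonneg (adjoint P (b i))]
  have sumInner : Summable fun i => ‖⟪P (b i), adjoint P (b i)⟫_ℂ‖ :=
    Summable.of_nonneg_of_le (fun i => norm_nonneg _) hnormterm
      ((sumP.div_const 2).add (sumAdjP.div_const 2))
  have key : ∑' i, ‖G' (b i)‖ ^ 2 ≤ (hsum b P).toReal := by
    have h1 : ∑' i, ‖G' (b i)‖ ^ 2 = (∑' i, ⟪P (b i), adjoint P (b i)⟫_ℂ).re := by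
      rw [← hc3, Complex.ofReal_re]
    rw [h1]
    calc (∑' i, ⟪P (b i), adjoint P (b i)⟫_ℂ).re
        ≤ ‖∑' i, ⟪P (b i), adjoint P (b i)⟫_ℂ‖ := by
          exact Complex.re_le_norm _
      _ ≤ ∑' i, ‖⟪P (b i), adjoint P (b i)⟫_ℂ‖ := norm_tsum_le_tsum_norm sumInner
      _ ≤ ∑' i, (‖P (b i)‖ ^ 2 / 2 + ‖adjoint P (b i)‖ ^ 2 / 2) :=
          Summable.tsum_le_tsum hnormterm sumInner ((sumP.div_const 2).add (sumAdjP.div_const 2))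
      _ = (∑' i, ‖P (b i)‖ ^ 2) / 2 + (∑' i, ‖adjoint P (b i)‖ ^ 2) / 2 := by
          rw [Summable.tsum_add (sumP.div_const 2) (sumAdjP.div_const 2), tsum_div_const, tsum_div_const]
      _ = (hsum b P).toReal := by
          rw [real_tsum_eq_toReal b P sumP, real_tsum_eq_toReal b (adjoint P) sumAdjP,
            hsum_adjoint b P]
          ring
  -- conclude
  have hfun : (fun x : ℝ => x * (Real.sqrt (x + ε))⁻¹) = fun x => x * g x := rfl
  rw [hfun, hGoal]
  calc hsum b G' = ENNReal.ofReal (∑' i, ‖G' (b i)‖ ^ 2) := hsum_eq_ofReal b G' sumG'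
    _ ≤ ENNReal.ofReal (hsum b P).toReal := ENNReal.ofReal_le_ofReal key
    _ = hsum b P := ENNReal.ofReal_toReal finP.ne
    _ ≤ (‖A0‖₊ : ℝ≥0∞) ^ 2 * hsum b K := hsum_mul_left b A0 K
    _ ≤ 1 * hsum b K := by
        refine mul_le_mul_left ?_ _
        have h1 : (‖A0‖₊ : ℝ≥0∞) ≤ 1 := by exact_mod_cast hA0norm
        simpa using pow_le_pow_left' h1 2
    _ = hsum b K := one_mul _

/-- Hilbert–Schmidt symmetrisation estimate: for bounded nonnegative
self-adjoint operators `L, M` on a complex Hilbert space with Hilbert basis `(e_i)`, if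
`Σ_i ‖(L M) e_i‖² < ∞` then `Σ_i ‖(√L M √L) e_i‖² ≤ Σ_i ‖(L M) e_i‖²` (sums in `ℝ≥0∞`). -/
theorem hilbert_schmidt_symmetrisation
    {H : Type*} [NormedAddCommGroup H] [InnerProductSpace ℂ H] [CompleteSpace H]
    {I : Type*} (b : HilbertBasis I ℂ H)
    (L M : H →L[ℂ] H) (hL : L.IsPositive) (hM : M.IsPositive)
    (hfin : ∑' i : I, (‖(L * M) (b i)‖₊ : ℝ≥0∞) ^ 2 < ⊤) :
    ∑' i : I, (‖(cfc Real.sqrt L * M * cfc Real.sqrt L) (b i)‖₊ : ℝ≥0∞) ^ 2 ≤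
      ∑' i : I, (‖(L * M) (b i)‖₊ : ℝ≥0∞) ^ 2 := by
  show hsum b (cfc Real.sqrt L * M * cfc Real.sqrt L) ≤ hsum b (L * M)
  have hfin' : hsum b (L * M) < ⊤ := hfin
  have hLsa : IsSelfAdjoint L := hL.isSelfAdjoint
  have hspec : ∀ x ∈ spectrum ℝ L, 0 ≤ x := by
    have h := hL.spectrumRestricts
    rw [SpectrumRestricts.nnreal_iff] at h
    exact h
  set S := cfc Real.sqrt L with hSdef
  set Sn : ℕ → (H →L[ℂ] H) :=
    fun n => cfc (fun x : ℝ => x * (Real.sqrt (x + 1 / (n + 1)))⁻¹) L with hSndef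
  have hbound : ∀ n : ℕ, hsum b (Sn n * M * Sn n) ≤ hsum b (L * M) := fun n =>
    hsum_step b L M hL hM hfin' (by positivity)
  have hdiff : ∀ n : ℕ, ‖Sn n - S‖ ≤ Real.sqrt (1 / (n + 1)) := by
    intro n
    have hε : (0 : ℝ) < 1 / (n + 1) := by positivity
    have hgc : ContinuousOn (fun x : ℝ => x * (Real.sqrt (x + 1 / (n + 1)))⁻¹)
        (spectrum ℝ L) := by
      refine continuousOn_id.mul ?_
      intro x hx
      have hx0 := hspec x hx
      have h1 : Real.sqrt (x + 1 / (n + 1)) ≠ 0 :=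
        ne_of_gt (Real.sqrt_pos.mpr (by linarith))
      exact (((Real.continuous_sqrt.comp (continuous_add_right _)).continuousAt).inv₀
        h1).continuousWithinAt
    have hsub : Sn n - S
        = cfc (fun x : ℝ => x * (Real.sqrt (x + 1 / (n + 1)))⁻¹ - Real.sqrt x) L := by
      rw [hSndef, hSdef, cfc_sub _ _ L hgc Real.continuous_sqrt.continuousOn]
    rw [hsub]
    refine norm_cfc_le (Real.sqrt_nonneg _) fun x hx => ?_
    rw [Real.norm_eq_abs]
    exact sqrt_reg_aux hε (hspec x hx)
  have htend : Filter.Tendsto Sn Filter.atTop (nhds S) := by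
    rw [tendsto_iff_norm_sub_tendsto_zero]
    have hsq : Filter.Tendsto (fun n : ℕ => Real.sqrt (1 / (n + 1)))
        Filter.atTop (nhds 0) := by
      have h0 : Filter.Tendsto (fun n : ℕ => (1 : ℝ) / (n + 1)) Filter.atTop (nhds 0) :=
        tendsto_one_div_add_atTop_nhds_zero_nat
      have := (Real.continuous_sqrt.tendsto 0).comp h0
      simpa only [Function.comp_def, Real.sqrt_zero] using this
    exact squeeze_zero (fun n => norm_nonneg _) hdiff hsq
  have hop : Filter.Tendsto (fun n => Sn n * M * Sn n) Filter.atTop (nhds (S * M * S)) :=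
    (htend.mul tendsto_const_nhds).mul htend
  have happ : ∀ i : I, Filter.Tendsto (fun n => (‖(Sn n * M * Sn n) (b i)‖₊ : ℝ≥0∞) ^ 2)
      Filter.atTop (nhds ((‖(S * M * S) (b i)‖₊ : ℝ≥0∞) ^ 2)) := by
    intro i
    have h1 : Filter.Tendsto (fun n => (Sn n * M * Sn n) (b i)) Filter.atTop
        (nhds ((S * M * S) (b i))) := by
      have hcont : Continuous fun A : H →L[ℂ] H => A (b i) :=
        (ContinuousLinearMap.apply ℂ H (b i)).continuous
      exact (hcont.tendsto _).comp hop
    exact ((ENNReal.continuous_pow 2).tendsto _).comp (ENNReal.tendsto_coe.mpr h1.nnnorm)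
  rw [show hsum b (S * M * S) = ∑' i, (‖(S * M * S) (b i)‖₊ : ℝ≥0∞) ^ 2 from rfl,
    ENNReal.tsum_eq_iSup_sum]
  refine iSup_le fun s => ?_
  refine le_of_tendsto (tendsto_finset_sum s fun i _ => happ i) ?_
  filter_upwards with n
  calc ∑ i ∈ s, (‖(Sn n * M * Sn n) (b i)‖₊ : ℝ≥0∞) ^ 2
      ≤ hsum b (Sn n * M * Sn n) := ENNReal.sum_le_tsum s
    _ ≤ hsum b (L * M) := hbound n
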